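/- arXiv:2101.09229 — 3 statements merged into one kernel-verified Lean document; each statement's English description precedes it below -/
import Mathlib

section
/- Let C be a symmetric monoidal closed category with unit object 𝟙 and internal hom F(−,−). For an object X of C, the following three conditions are equivalent: (1) the canonical map ν_{X,Y} : F(X,𝟙) ⊗ Y ⟶ F(X,Y) is an isomorphism for every object Y; (2) the canonical map ν_{X,X} : F(X,𝟙) ⊗ X ⟶ F(X,X) is an isomorphism; (3) there exists a map coev : 𝟙 ⟶ X ⊗ F(X,𝟙) such that ν_{X,X} ∘ β_{X,F(X,𝟙)} ∘ coev = η_X, where β denotes the braiding and η_X : 𝟙 ⟶ F(X,X) is the adjoint transpose of the left unitor 𝟙 ⊗ X ≅ X. -/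
open CategoryTheory MonoidalCategory MonoidalClosed

universe v u

variable {C : Type u} [Category.{v} C] [MonoidalCategory C] [SymmetricCategory C]
  [MonoidalClosed C]

/-- The canonical map `ν_{X,Y} : F(X,𝟙) ⊗ Y ⟶ F(X,Y)`, obtained as the adjoint transpose
(currying) of the composite
`X ⊗ (F(X,𝟙) ⊗ Y) ≅ (X ⊗ F(X,𝟙)) ⊗ Y ⟶ 𝟙 ⊗ Y ≅ Y`,
where the middle map is the evaluation (counit of the tensor–hom adjunction at `𝟙`)
tensored with the identity of `Y`. -/
noncomputable def nu (X Y : C) : (ihom X).obj (𝟙_ C) ⊗ Y ⟶ (ihom X).obj Y :=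
  MonoidalClosed.curry
    ((α_ X ((ihom X).obj (𝟙_ C)) Y).inv ≫ ((ihom.ev X).app (𝟙_ C) ▷ Y) ≫ (λ_ Y).hom)

/-- `η_X : 𝟙 ⟶ F(X,X)`, the adjoint transpose of the unitor `X ⊗ 𝟙 ≅ X`. -/
noncomputable def etaMap (X : C) : 𝟙_ C ⟶ (ihom X).obj X :=
  MonoidalClosed.curry (ρ_ X).hom

noncomputable def theta (X Y : C) (c' : 𝟙_ C ⟶ (ihom X).obj (𝟙_ C) ⊗ X) :
    (ihom X).obj Y ⟶ (ihom X).obj (𝟙_ C) ⊗ Y :=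
  (λ_ _).inv ≫ (c' ▷ ((ihom X).obj Y)) ≫ (α_ _ X _).hom ≫ (_ ◁ (ihom.ev X).app Y)

section
variable (X : C) (c' : 𝟙_ C ⟶ (ihom X).obj (𝟙_ C) ⊗ X)
  (H : (X ◁ c') ≫ (α_ X ((ihom X).obj (𝟙_ C)) X).inv ≫ ((ihom.ev X).app (𝟙_ C) ▷ X)
      ≫ (λ_ X).hom = (ρ_ X).hom)

set_option linter.unusedSectionVars false

include H in
lemma key (Z : C) :
    (X ◁ (λ_ Z).inv) ≫ (X ◁ (c' ▷ Z)) ≫ (X ◁ (α_ ((ihom X).obj (𝟙_ C)) X Z).hom)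
      ≫ (α_ X ((ihom X).obj (𝟙_ C)) (X ⊗ Z)).inv
      ≫ ((ihom.ev X).app (𝟙_ C) ▷ (X ⊗ Z)) ≫ (λ_ (X ⊗ Z)).hom = 𝟙 (X ⊗ Z) := by
  calc _ = ((ρ_ X).inv ▷ Z) ≫ (((X ◁ c') ≫ (α_ X ((ihom X).obj (𝟙_ C)) X).inv
        ≫ ((ihom.ev X).app (𝟙_ C) ▷ X) ≫ (λ_ X).hom) ▷ Z) := by
        monoidal
    _ = 𝟙 (X ⊗ Z) := by rw [H]; simp

include H in
lemma theta_nu (Y : C) : theta X Y c' ≫ nu X Y = 𝟙 ((ihom X).obj Y) := by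
  apply uncurry_injective
  rw [uncurry_natural_left, nu, uncurry_curry, uncurry_id_eq_ev, theta]
  calc _ = (X ◁ (λ_ ((ihom X).obj Y)).inv) ≫ (X ◁ (c' ▷ ((ihom X).obj Y)))
        ≫ (X ◁ (α_ ((ihom X).obj (𝟙_ C)) X ((ihom X).obj Y)).hom)
        ≫ (α_ X ((ihom X).obj (𝟙_ C)) (X ⊗ (ihom X).obj Y)).inv
        ≫ ((X ⊗ (ihom X).obj (𝟙_ C)) ◁ (ihom.ev X).app Y)
        ≫ ((ihom.ev X).app (𝟙_ C) ▷ Y) ≫ (λ_ Y).hom := by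
        monoidal
    _ = (ihom.ev X).app Y := by
        have hx := whisker_exchange ((ihom.ev X).app (𝟙_ C)) ((ihom.ev X).app Y)
        have hl := leftUnitor_naturality ((ihom.ev X).app Y)
        simp only [Functor.id_obj, Functor.comp_obj, curriedTensor_obj_obj] at hx hl
        rw [reassoc_of% hx, hl]
        rw [reassoc_of% (key X c' H ((ihom X).obj Y))]

include H in
lemma sMap_id :
    (λ_ ((ihom X).obj (𝟙_ C))).inv ≫ (c' ▷ ((ihom X).obj (𝟙_ C)))
      ≫ (α_ ((ihom X).obj (𝟙_ C)) X ((ihom X).obj (𝟙_ C))).hom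
      ≫ (((ihom X).obj (𝟙_ C)) ◁ (ihom.ev X).app (𝟙_ C))
      ≫ (ρ_ ((ihom X).obj (𝟙_ C))).hom = 𝟙 ((ihom X).obj (𝟙_ C)) := by
  apply uncurry_injective
  rw [uncurry_eq, uncurry_id_eq_ev]
  calc _ = (X ◁ (λ_ ((ihom X).obj (𝟙_ C))).inv) ≫ (X ◁ (c' ▷ ((ihom X).obj (𝟙_ C))))
        ≫ (X ◁ (α_ ((ihom X).obj (𝟙_ C)) X ((ihom X).obj (𝟙_ C))).hom)
        ≫ (α_ X ((ihom X).obj (𝟙_ C)) (X ⊗ (ihom X).obj (𝟙_ C))).inv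
        ≫ ((X ⊗ (ihom X).obj (𝟙_ C)) ◁ (ihom.ev X).app (𝟙_ C))
        ≫ (ρ_ (X ⊗ (ihom X).obj (𝟙_ C))).hom ≫ (ihom.ev X).app (𝟙_ C) := by
        monoidal
    _ = (ihom.ev X).app (𝟙_ C) := by
        have hr := rightUnitor_naturality ((ihom.ev X).app (𝟙_ C))
        have hx := whisker_exchange ((ihom.ev X).app (𝟙_ C)) ((ihom.ev X).app (𝟙_ C))
        have hl := leftUnitor_naturality ((ihom.ev X).app (𝟙_ C))
        simp only [Functor.id_obj, Functor.comp_obj, curriedTensor_obj_obj] at hr hx hl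
        rw [← hr, reassoc_of% hx, ← unitors_equal, hl]
        rw [reassoc_of% (key X c' H ((ihom X).obj (𝟙_ C)))]

include H in
lemma nu_theta (Y : C) : nu X Y ≫ theta X Y c' = 𝟙 ((ihom X).obj (𝟙_ C) ⊗ Y) := by
  have huncur : X ◁ nu X Y ≫ (ihom.ev X).app Y
      = (α_ X ((ihom X).obj (𝟙_ C)) Y).inv ≫ ((ihom.ev X).app (𝟙_ C) ▷ Y) ≫ (λ_ Y).hom := by
    rw [← uncurry_eq, nu, uncurry_curry]
  calc nu X Y ≫ theta X Y c'
      = (λ_ ((ihom X).obj (𝟙_ C) ⊗ Y)).inv ≫ (𝟙_ C ◁ nu X Y) ≫ (c' ▷ ((ihom X).obj Y))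
        ≫ (α_ ((ihom X).obj (𝟙_ C)) X ((ihom X).obj Y)).hom
        ≫ (((ihom X).obj (𝟙_ C)) ◁ (ihom.ev X).app Y) := by
        rw [theta, leftUnitor_inv_naturality_assoc]
    _ = (λ_ ((ihom X).obj (𝟙_ C) ⊗ Y)).inv ≫ (c' ▷ ((ihom X).obj (𝟙_ C) ⊗ Y))
        ≫ ((((ihom X).obj (𝟙_ C)) ⊗ X) ◁ nu X Y)
        ≫ (α_ ((ihom X).obj (𝟙_ C)) X ((ihom X).obj Y)).hom
        ≫ (((ihom X).obj (𝟙_ C)) ◁ (ihom.ev X).app Y) := by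
        rw [whisker_exchange_assoc]
    _ = (λ_ ((ihom X).obj (𝟙_ C) ⊗ Y)).inv ≫ (c' ▷ ((ihom X).obj (𝟙_ C) ⊗ Y))
        ≫ (α_ ((ihom X).obj (𝟙_ C)) X ((ihom X).obj (𝟙_ C) ⊗ Y)).hom
        ≫ (((ihom X).obj (𝟙_ C)) ◁ (X ◁ nu X Y ≫ (ihom.ev X).app Y)) := by
        rw [associator_naturality_right_assoc, MonoidalCategory.whiskerLeft_comp]
    _ = (λ_ ((ihom X).obj (𝟙_ C) ⊗ Y)).inv ≫ (c' ▷ ((ihom X).obj (𝟙_ C) ⊗ Y))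
        ≫ (α_ ((ihom X).obj (𝟙_ C)) X ((ihom X).obj (𝟙_ C) ⊗ Y)).hom
        ≫ (((ihom X).obj (𝟙_ C)) ◁ ((α_ X ((ihom X).obj (𝟙_ C)) Y).inv
            ≫ ((ihom.ev X).app (𝟙_ C) ▷ Y) ≫ (λ_ Y).hom)) := by
        rw [huncur]
    _ = ((λ_ ((ihom X).obj (𝟙_ C))).inv ≫ (c' ▷ ((ihom X).obj (𝟙_ C)))
        ≫ (α_ ((ihom X).obj (𝟙_ C)) X ((ihom X).obj (𝟙_ C))).hom
        ≫ (((ihom X).obj (𝟙_ C)) ◁ (ihom.ev X).app (𝟙_ C))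
        ≫ (ρ_ ((ihom X).obj (𝟙_ C))).hom) ▷ Y := by
        monoidal
    _ = 𝟙 _ := by rw [sMap_id X c' H]; simp

end

/-- For an object `X` of a symmetric monoidal closed category,
the following are equivalent:
(1) `ν_{X,Y}` is an isomorphism for every `Y`;
(2) `ν_{X,X}` is an isomorphism;
(3) there is a map `coev : 𝟙 ⟶ X ⊗ F(X,𝟙)` with
    `coev ≫ β_{X,F(X,𝟙)} ≫ ν_{X,X} = η_X`. -/
theorem strongly_dualizable_tfae (X : C) :
    ((∀ Y : C, IsIso (nu X Y)) ↔ IsIso (nu X X)) ∧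
    (IsIso (nu X X) ↔
      ∃ coev : 𝟙_ C ⟶ X ⊗ (ihom X).obj (𝟙_ C),
        coev ≫ (β_ X ((ihom X).obj (𝟙_ C))).hom ≫ nu X X = etaMap X) := by
  have two_three : IsIso (nu X X) →
      ∃ coev : 𝟙_ C ⟶ X ⊗ (ihom X).obj (𝟙_ C),
        coev ≫ (β_ X ((ihom X).obj (𝟙_ C))).hom ≫ nu X X = etaMap X := by
    intro h
    refine ⟨etaMap X ≫ inv (nu X X) ≫ (β_ ((ihom X).obj (𝟙_ C)) X).hom, ?_⟩
    simp [SymmetricCategory.symmetry_assoc]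
  have three_one : (∃ coev : 𝟙_ C ⟶ X ⊗ (ihom X).obj (𝟙_ C),
        coev ≫ (β_ X ((ihom X).obj (𝟙_ C))).hom ≫ nu X X = etaMap X) →
      ∀ Y : C, IsIso (nu X Y) := by
    rintro ⟨c, hc⟩ Y
    rw [← Category.assoc] at hc
    have H : (X ◁ (c ≫ (β_ X ((ihom X).obj (𝟙_ C))).hom))
        ≫ (α_ X ((ihom X).obj (𝟙_ C)) X).inv
        ≫ ((ihom.ev X).app (𝟙_ C) ▷ X) ≫ (λ_ X).hom = (ρ_ X).hom := by
      have h2 := congrArg MonoidalClosed.uncurry hc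
      rw [uncurry_natural_left, etaMap, uncurry_curry, nu, uncurry_curry] at h2
      simpa using h2
    exact ⟨theta X Y _, nu_theta X _ H Y, theta_nu X _ H Y⟩
  exact ⟨⟨fun h => h X, fun h => three_one (two_three h)⟩,
    ⟨two_three, fun h => three_one h X⟩⟩
end

section
/- Let C be a symmetric monoidal closed category. If A is a retract of a strongly dualizable object X (i.e. there are maps s : A ⟶ X and r : X ⟶ A with r ∘ s = id_A), then A is strongly dualizable; that is, if ν_{X,Y} is an isomorphism for every object Y, then ν_{A,Y} is an isomorphism for every object Y. -/
open CategoryTheory MonoidalCategory MonoidalClosed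

universe v u

variable {C : Type u} [Category.{v} C] [MonoidalCategory C] [SymmetricCategory C]
  [MonoidalClosed C]

/-- Naturality of `nu` in the first variable. -/
theorem nu_natural {A X : C} (f : A ⟶ X) (Y : C) :
    nu X Y ≫ (MonoidalClosed.pre f).app Y =
      ((MonoidalClosed.pre f).app (𝟙_ C) ▷ Y) ≫ nu A Y := by
  apply uncurry_injective
  simp only [nu, uncurry_natural_left, uncurry_curry, MonoidalClosed.uncurry_pre]
  rw [whisker_exchange_assoc, ← uncurry_eq, uncurry_curry]
  rw [associator_inv_naturality_left_assoc]
  conv_rhs => rw [associator_inv_naturality_middle_assoc, ← comp_whiskerRight_assoc,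
    id_tensor_pre_app_comp_ev, comp_whiskerRight_assoc]

/-- A retract `A` of a strongly dualizable object `X` of a symmetric
monoidal closed category is strongly dualizable: if `ν_{X,Y}` is an isomorphism for
every `Y`, then `ν_{A,Y}` is an isomorphism for every `Y`. -/
theorem retract_strongly_dualizable (X A : C) (s : A ⟶ X) (r : X ⟶ A)
    (hsr : s ≫ r = 𝟙 A) (hX : ∀ Y : C, IsIso (nu X Y)) :
    ∀ Y : C, IsIso (nu A Y) := by
  intro Y
  have := hX Y
  have hcomp : ∀ Z : C, (MonoidalClosed.pre r).app Z ≫ (MonoidalClosed.pre s).app Z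
      = 𝟙 _ := by
    intro Z
    rw [← NatTrans.comp_app, ← MonoidalClosed.pre_map, hsr, MonoidalClosed.pre_id,
      NatTrans.id_app]
  refine ⟨⟨(MonoidalClosed.pre r).app Y ≫ inv (nu X Y) ≫
      ((MonoidalClosed.pre s).app (𝟙_ C) ▷ Y), ?_, ?_⟩⟩
  · have hr : nu A Y ≫ (MonoidalClosed.pre r).app Y =
        ((MonoidalClosed.pre r).app (𝟙_ C) ▷ Y) ≫ nu X Y := nu_natural r Y
    rw [← Category.assoc, hr]
    simp only [Category.assoc, IsIso.hom_inv_id_assoc]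
    rw [← comp_whiskerRight, hcomp, id_whiskerRight]
  · have hs := nu_natural s Y
    calc ((MonoidalClosed.pre r).app Y ≫ inv (nu X Y) ≫
          ((MonoidalClosed.pre s).app (𝟙_ C) ▷ Y)) ≫ nu A Y
        = (MonoidalClosed.pre r).app Y ≫ inv (nu X Y) ≫ nu X Y ≫
          (MonoidalClosed.pre s).app Y := by
          simp only [Category.assoc, hs]
      _ = 𝟙 _ := by rw [IsIso.inv_hom_id_assoc, hcomp]
end

section
/- Let l be a prime number and let R be a (not necessarily commutative) ring in which l·1 = 0. Let x ∈ R and suppose that the additive endomorphism ad(x) : b ↦ x·b − b·x is nilpotent, i.e. there is some k ≥ 1 with (ad x)^k = 0. Then there exists a natural number N such that x^(l^N) is central in R, i.e. x^(l^N)·b = b·x^(l^N) for every b ∈ R. -/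
/-- For `x` in a ring `R`, `ad x` is the additive map `b ↦ x * b - b * x`. -/
def adMap {R : Type*} [Ring R] (x : R) : R → R := fun b => x * b - b * x

/-- Let `l` be a prime and `R` a ring with `l • 1 = 0`.  If `ad x` is
nilpotent, then some power `x ^ (l ^ N)` of `x` is central in `R`. -/
theorem pow_central_of_ad_nilpotent {l : ℕ} (hl : l.Prime) {R : Type*} [Ring R]
    (hchar : (l : R) = 0) (x : R) (k : ℕ) (hk : 1 ≤ k)
    (hnil : ∀ b : R, (adMap x)^[k] b = 0) :
    ∃ N : ℕ, ∀ b : R, x ^ l ^ N * b = b * x ^ l ^ N := by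
  rcases subsingleton_or_nontrivial R with hR | hR
  · exact ⟨0, fun b => Subsingleton.elim _ _⟩
  haveI : Fact l.Prime := ⟨hl⟩
  haveI : CharP R l := by
    have hd : ringChar R ∣ l := ringChar.dvd hchar
    rcases (Nat.Prime.eq_one_or_self_of_dvd hl _ hd) with h1 | h1
    · exact absurd h1 (CharP.char_ne_one R (ringChar R))
    · exact ringChar.of_eq h1
  haveI : CharP (AddMonoid.End R) l := by
    constructor
    intro n
    rw [← CharP.cast_eq_zero_iff R l n]
    constructor
    · intro h
      have := DFunLike.congr_fun h (1 : R)
      simpa [AddMonoid.End.natCast_apply, nsmul_eq_mul] using this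
    · intro h
      refine DFunLike.ext _ _ fun b => ?_
      simp [AddMonoid.End.natCast_apply, nsmul_eq_mul, h]
  set L : AddMonoid.End R := AddMonoid.End.mulLeft x
  set Rr : AddMonoid.End R := AddMonoid.End.mulRight x
  have hcomm : Commute L Rr := by
    refine DFunLike.ext _ _ fun b => ?_
    show x * (b * x) = (x * b) * x
    rw [mul_assoc]
  have hLpow : ∀ (n : ℕ) (b : R), (L ^ n) b = x ^ n * b := by
    intro n
    induction n with
    | zero => intro b; simp
    | succ n ih =>
      intro b
      rw [pow_succ, pow_succ]
      have : (L ^ n * L) b = (L ^ n) (L b) := rfl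
      rw [this, ih]
      show x ^ n * (x * b) = x ^ n * x * b
      rw [mul_assoc]
  have hRpow : ∀ (n : ℕ) (b : R), (Rr ^ n) b = b * x ^ n := by
    intro n
    induction n with
    | zero => intro b; simp
    | succ n ih =>
      intro b
      rw [pow_succ]
      have : (Rr ^ n * Rr) b = (Rr ^ n) (Rr b) := rfl
      rw [this, ih]
      show b * x * x ^ n = b * x ^ (n + 1)
      rw [mul_assoc, ← pow_succ']

  have had : ∀ b : R, (L - Rr) b = adMap x b := fun b => rfl
  have hadpow : ∀ (n : ℕ) (b : R), ((L - Rr) ^ n) b = (adMap x)^[n] b := by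
    intro n
    induction n with
    | zero => intro b; simp
    | succ n ih =>
      intro b
      rw [pow_succ, Function.iterate_succ_apply]
      have h1 : ((L - Rr) ^ n * (L - Rr)) b = ((L - Rr) ^ n) ((L - Rr) b) := rfl
      rw [h1, had, ih]
  -- choose N with k ≤ l ^ N
  obtain ⟨N, hN⟩ := pow_unbounded_of_one_lt (y := l) k hl.one_lt
  refine ⟨N, fun b => ?_⟩
  have hzero : (L - Rr) ^ l ^ N = 0 := by
    have : (L - Rr) ^ l ^ N = (L - Rr) ^ (l ^ N - k) * (L - Rr) ^ k := by
      rw [← pow_add, Nat.sub_add_cancel hN.le]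
    refine DFunLike.ext _ _ fun b => ?_
    rw [this]
    have h1 : ((L - Rr) ^ (l ^ N - k) * (L - Rr) ^ k) b
        = ((L - Rr) ^ (l ^ N - k)) (((L - Rr) ^ k) b) := rfl
    rw [h1, hadpow k b, hnil b, hadpow]
    rw [Function.iterate_fixed (by simp [adMap])]
    rfl
  have key : L ^ l ^ N - Rr ^ l ^ N = 0 := by
    rw [← sub_pow_char_pow_of_commute (p := l) (n := N) hcomm, hzero]
  have := DFunLike.congr_fun key b
  have h2 : (L ^ l ^ N - Rr ^ l ^ N) b = (L ^ l ^ N) b - (Rr ^ l ^ N) b := rfl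
  rw [h2, hLpow, hRpow] at this
  have h3 : (0 : AddMonoid.End R) b = 0 := rfl
  rw [h3] at this
  exact sub_eq_zero.mp this
end
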